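/- Let k be an odd prime. For each primitive root r mod k, let a_r ∈ (ℤ/k)* solve a(2-a)^{-1} ≡ r and set q₁ = (k-1)(-a_r)^{-1} mod k, q₂ = (k-1)(-(2-a_r))^{-1} mod k, q₃ = k - q₁ - q₂ mod k. Then for all sufficiently large primes k, there exists a primitive root r mod k such that q₁, q₂, q₃ are nonzero and pairwise distinct. -/

import Mathlib

-- helper: totient lower bound
lemma totient_three_le {n : ℕ} (hn : 7 ≤ n) : 3 ≤ n.totient := by
  by_contra h
  push_neg at h
  have hφ : n.totient ≤ 2 := by omega
  have hn0 : 0 < n := by omega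
  have hdvd : ∀ d : ℕ, d ∣ n → d.totient ≤ 2 := fun d hd =>
    le_trans (Nat.le_of_dvd (by simpa using hn0) (Nat.totient_dvd_of_dvd hd)) hφ
  have hn12 : n ∣ 12 := by
    rw [Nat.dvd_iff_prime_pow_dvd_dvd]
    intro p k hp hpk
    have hpn : p.Prime := hp
    rcases Nat.eq_zero_or_pos k with rfl | hk
    · simp only [pow_zero]; exact one_dvd _
    have hpdvd : p ∣ n := dvd_trans (dvd_pow_self p hk.ne') hpk
    have hp2 : p.totient ≤ 2 := hdvd p hpdvd
    rw [Nat.totient_prime hpn] at hp2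
    have hple : p ≤ 3 := by omega
    have hge : 2 ≤ p := hpn.two_le
    interval_cases p
    · -- p = 2
      have : k ≤ 2 := by
        by_contra hk3
        have h8 : (8 : ℕ) ∣ n := dvd_trans (by exact pow_dvd_pow 2 (by omega) : (2:ℕ)^3 ∣ 2^k) hpk
        have h4 := hdvd 8 h8
        rw [show Nat.totient 8 = 4 from by decide] at h4
        omega
      calc (2:ℕ)^k ∣ 2^2 := pow_dvd_pow 2 this
        _ ∣ 12 := by norm_num
    · -- p = 3
      have : k ≤ 1 := by
        by_contra hk2
        have h9 : (9 : ℕ) ∣ n := dvd_trans (by exact pow_dvd_pow 3 (by omega) : (3:ℕ)^2 ∣ 3^k) hpk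
        have h6 := hdvd 9 h9
        rw [show Nat.totient 9 = 6 from by decide] at h6
        omega
      calc (3:ℕ)^k ∣ 3^1 := pow_dvd_pow 3 this
        _ ∣ 12 := by norm_num
  have hle : n ≤ 12 := Nat.le_of_dvd (by norm_num) hn12
  interval_cases n <;> revert hn12 hφ <;> decide

theorem exists_primitive_root_q_distinct :
    ∃ N : ℕ, ∀ k : ℕ, Nat.Prime k → N ≤ k →
      ∃ r : (ZMod k)ˣ, (∀ u : (ZMod k)ˣ, u ∈ Subgroup.zpowers r) ∧
        ∃ a : ZMod k, a ≠ 0 ∧ 2 - a ≠ 0 ∧ a * (2 - a)⁻¹ = (r : ZMod k) ∧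
          (let q₁ : ZMod k := ((k - 1 : ℕ) : ZMod k) * (-a)⁻¹
           let q₂ : ZMod k := ((k - 1 : ℕ) : ZMod k) * (-(2 - a))⁻¹
           let q₃ : ZMod k := -(q₁ + q₂)
           q₁ ≠ 0 ∧ q₂ ≠ 0 ∧ q₃ ≠ 0 ∧ q₁ ≠ q₂ ∧ q₁ ≠ q₃ ∧ q₂ ≠ q₃) := by
  classical
  refine ⟨13, fun k hk hkN => ?_⟩
  haveI : Fact k.Prime := ⟨hk⟩
  have hcard : Fintype.card (ZMod k)ˣ = k - 1 := by
    rw [ZMod.card_units_eq_totient, Nat.totient_prime hk]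
  have htot : 3 ≤ (k - 1).totient := totient_three_le (by omega)
  set S : Finset (ZMod k)ˣ :=
    Finset.univ.filter (fun x => orderOf x = Fintype.card (ZMod k)ˣ) with hSdef
  have hS : S.card = (k - 1).totient := by
    rw [hSdef]
    have := IsCyclic.card_orderOf_eq_totient (α := (ZMod k)ˣ)
      (d := Fintype.card (ZMod k)ˣ) dvd_rfl
    rw [hcard] at this
    simp only [hcard]
    exact this
  have hex : ∃ x ∈ S, (x : ZMod k) ≠ -2 ∧ (x : ZMod k) ≠ (-2 : ZMod k)⁻¹ := by
    by_contra hcon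
    push_neg at hcon
    have hsub : ∀ x ∈ S, (x : ZMod k) ∈ ({-2, (-2 : ZMod k)⁻¹} : Finset (ZMod k)) := by
      intro x hx
      rcases Classical.em ((x : ZMod k) = -2) with h | h
      · simp [h]
      · simp [hcon x hx h]
    have hinj := Finset.card_le_card_of_injOn (f := fun x : (ZMod k)ˣ => (x : ZMod k))
      hsub (fun a _ b _ h => Units.ext h)
    have hc2 : ({-2, (-2 : ZMod k)⁻¹} : Finset (ZMod k)).card ≤ 2 :=
      (Finset.card_insert_le _ _).trans (by simp)
    omega
  obtain ⟨r, hrS, hr2, hr2'⟩ := hex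
  have hord : orderOf r = Fintype.card (ZMod k)ˣ := (Finset.mem_filter.mp hrS).2
  have hgen : ∀ u : (ZMod k)ˣ, u ∈ Subgroup.zpowers r := by
    intro u
    have htop : Subgroup.zpowers r = ⊤ := by
      apply Subgroup.eq_top_of_card_eq
      rw [Nat.card_zpowers, hord, Nat.card_eq_fintype_card]
    rw [htop]; trivial
  set x : ZMod k := (r : ZMod k) with hxdef
  have hx0 : x ≠ 0 := Units.ne_zero r
  have h2 : (2 : ZMod k) ≠ 0 := by
    intro h
    have h' : ((2 : ℕ) : ZMod k) = 0 := by exact_mod_cast h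
    rw [ZMod.natCast_eq_zero_iff] at h'
    have := Nat.le_of_dvd (by norm_num) h'
    omega
  have hordbig : 2 < orderOf r := by rw [hord, hcard]; omega
  have hx1 : x ≠ 1 := by
    intro h
    have : r = 1 := Units.ext (by simpa [hxdef] using h)
    rw [this, orderOf_one] at hordbig; omega
  have hxm1 : x ≠ -1 := by
    intro h
    have hr2eq : r ^ 2 = 1 := Units.ext (by push_cast; rw [← hxdef, h]; ring)
    have := orderOf_dvd_of_pow_eq_one hr2eq
    have := Nat.le_of_dvd (by norm_num) this
    omega
  have h1x : (1 : ZMod k) + x ≠ 0 := by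
    intro h; exact hxm1 (by linear_combination h)
  set a : ZMod k := 2 * x * (1 + x)⁻¹ with hadef
  have ha0 : a ≠ 0 := mul_ne_zero (mul_ne_zero h2 hx0) (inv_ne_zero h1x)
  have h2a : 2 - a = 2 * (1 + x)⁻¹ := by
    rw [hadef]; field_simp; ring
  have h2a0 : 2 - a ≠ 0 := by rw [h2a]; exact mul_ne_zero h2 (inv_ne_zero h1x)
  have hmain : a * (2 - a)⁻¹ = x := by
    rw [h2a, hadef]; field_simp
  refine ⟨r, hgen, a, ha0, h2a0, hmain, ?_⟩
  have hk1 : ((k - 1 : ℕ) : ZMod k) = -1 := by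
    have h1k : 1 ≤ k := hk.one_lt.le
    rw [Nat.cast_sub h1k, ZMod.natCast_self, Nat.cast_one, zero_sub]
  intro q₁ q₂ q₃
  have hq1 : q₁ = a⁻¹ := by
    show ((k - 1 : ℕ) : ZMod k) * (-a)⁻¹ = a⁻¹
    rw [hk1, inv_neg]; ring
  have hq2 : q₂ = (2 - a)⁻¹ := by
    show ((k - 1 : ℕ) : ZMod k) * (-(2 - a))⁻¹ = (2 - a)⁻¹
    rw [hk1, inv_neg]; ring
  have hq3 : q₃ = -(a⁻¹ + (2 - a)⁻¹) := by rw [← hq1, ← hq2]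
  rw [hq1, hq2, hq3]
  refine ⟨inv_ne_zero ha0, inv_ne_zero h2a0, ?_, ?_, ?_, ?_⟩
  · -- q₃ ≠ 0
    intro h
    rw [neg_eq_zero] at h
    field_simp at h
    exact h2 (by simpa using h)
  · -- q₁ ≠ q₂
    intro h
    have h' : a = 2 - a := inv_injective h
    rw [hadef, h2a] at h'
    field_simp at h'
    exact hx1 h'
  · -- q₁ ≠ q₃
    intro h
    rw [hadef, h2a] at h
    field_simp at h
    have h3 : ((1 + x) * (2 * x) * 2) * (x + 2) = 0 := by linear_combination ((1 + x) * (2 * x) * 2) * h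
    have h5 := (mul_eq_zero.mp h3).resolve_left
      (mul_ne_zero (mul_ne_zero h1x (mul_ne_zero h2 hx0)) h2)
    exact hr2 (by linear_combination h5)
  · -- q₂ ≠ q₃
    intro h
    rw [hadef, h2a] at h
    field_simp at h
    have h4ne : (4 : ZMod k) ≠ 0 := by
      rw [show (4 : ZMod k) = 2 * 2 by norm_num]
      exact mul_ne_zero h2 h2
    have h3 : ((1 + x) * 4) * (2 * x + 1) = 0 := by linear_combination ((1 + x) * 4) * h
    have h5 := (mul_eq_zero.mp h3).resolve_left (mul_ne_zero h1x h4ne)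
    exact hr2' (eq_inv_of_mul_eq_one_right (by linear_combination -h5))
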